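/- Let n ≥ 1 and let S ⊆ (ℤ/n) \ {0} be a subset with S = -S. Then the Cayley graph Γ(ℤ/n, S) is integral (all eigenvalues of its adjacency matrix are integers) if and only if S is a union of some of the sets G_n(d) = { m ∈ ℤ/n : gcd(m, n) = d }, where d ranges over positive divisors of n (equivalently, if and only if whenever m ∈ S and m' ∈ ℤ/n satisfy gcd(m, n) = gcd(m', n), then m' ∈ S). -/

import Mathlib

/-- Adjacency matrix (over ℂ) of the Cayley graph Γ(R,S):
`a` and `b` are adjacent iff `b - a ∈ S`. -/
noncomputable def cayleyAdj {R : Type*} [Ring R] (S : Set R) : Matrix R R ℂ :=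
  fun a b => S.indicator (fun _ => (1 : ℂ)) (b - a)

/-- The Cayley graph Γ(R,S) is integral: every eigenvalue of its adjacency matrix
is a (rational) integer. -/
def IsIntegralCayley {R : Type*} [Ring R] [Fintype R] (S : Set R) : Prop :=
  letI := Classical.decEq R
  spectrum ℂ (cayleyAdj S) ⊆ Set.range ((↑) : ℤ → ℂ)

namespace SoAux

open ZMod Finset Polynomial

variable {n : ℕ} [NeZero n]

lemma sum_indicator_eq (S : Set (ZMod n)) (f : ZMod n → ℂ) :
    ∑ j : ZMod n, f j * S.indicator (fun _ => (1:ℂ)) j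
      = ∑ j ∈ (Set.toFinite S).toFinset, f j := by
  classical
  rw [← Finset.sum_filter_add_sum_filter_not Finset.univ (· ∈ S)]
  have h1 : ∀ j ∈ Finset.univ.filter (· ∈ S), f j * S.indicator (fun _ => (1:ℂ)) j = f j := by
    intro j hj
    simp only [Finset.mem_filter] at hj
    simp [Set.indicator_apply, hj.2]
  have h2 : ∀ j ∈ Finset.univ.filter (¬ · ∈ S), f j * S.indicator (fun _ => (1:ℂ)) j = 0 := by
    intro j hj
    simp only [Finset.mem_filter] at hj
    simp [Set.indicator_apply, hj.2]
  rw [Finset.sum_congr rfl h1, Finset.sum_congr rfl h2, Finset.sum_const_zero, add_zero]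
  apply Finset.sum_congr _ (fun _ _ => rfl)
  ext j
  simp [Set.Finite.mem_toFinset]

lemma dft_indicator (S : Set (ZMod n)) (k : ZMod n) :
    ZMod.dft (S.indicator (fun _ => (1:ℂ))) k
      = ∑ s ∈ (Set.toFinite S).toFinset, stdAddChar (-(s * k)) := by
  rw [ZMod.dft_apply, ← sum_indicator_eq S (fun j => stdAddChar (-(j * k)))]
  apply Finset.sum_congr rfl
  intro j _
  rw [smul_eq_mul, mul_comm]

lemma mulVec_char (S : Set (ZMod n)) (k : ZMod n) (a : ZMod n) :
    (cayleyAdj S).mulVec (fun b => stdAddChar (-(k * b))) a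
      = (ZMod.dft (S.indicator (fun _ => (1:ℂ))) k) * stdAddChar (-(k * a)) := by
  have step := Fintype.sum_equiv (Equiv.addLeft a)
    (fun s => S.indicator (fun _ => (1:ℂ)) s * (stdAddChar (-(k*a)) * stdAddChar (-(k*s))))
    (fun b => S.indicator (fun _ => (1:ℂ)) (b - a) * stdAddChar (-(k*b)))
    (by
      intro s
      simp only [Equiv.coe_addLeft, add_sub_cancel_left]
      rw [← AddChar.map_add_eq_mul]
      ring_nf)
  show ∑ b : ZMod n, S.indicator (fun _ => (1:ℂ)) (b - a) * stdAddChar (-(k*b)) = _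
  rw [← step, ZMod.dft_apply]
  rw [Finset.sum_mul]
  apply Finset.sum_congr rfl
  intro s _
  rw [smul_eq_mul, mul_comm s k]
  ring

lemma spectrum_cayley [DecidableEq (ZMod n)] (S : Set (ZMod n)) :
    spectrum ℂ (cayleyAdj S) = Set.range (ZMod.dft (S.indicator (fun _ => (1:ℂ)))) := by
  classical
  set Φ : ZMod n → ℂ := S.indicator (fun _ => (1:ℂ)) with hΦ
  apply Set.eq_of_subset_of_subset
  · intro μ hμ
    rw [spectrum.mem_iff] at hμ
    have hdet : (algebraMap ℂ (Matrix (ZMod n) (ZMod n) ℂ) μ - cayleyAdj S).det = 0 := by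
      by_contra h
      exact hμ ((Matrix.isUnit_iff_isUnit_det _).mpr (isUnit_iff_ne_zero.mpr h))
    obtain ⟨w, hw0, hw⟩ := Matrix.exists_mulVec_eq_zero_iff.mpr hdet
    have hmv : ∀ a, (cayleyAdj S).mulVec w a = μ * w a := by
      intro a
      have h2 := congrFun hw a
      rw [Matrix.sub_mulVec] at h2
      have h1 : (algebraMap ℂ (Matrix (ZMod n) (ZMod n) ℂ) μ).mulVec w a = μ * w a := by
        rw [Algebra.algebraMap_eq_smul_one, Matrix.smul_mulVec, Matrix.one_mulVec]
        rfl
      simp only [Pi.sub_apply, h1, Pi.zero_apply] at h2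
      exact (sub_eq_zero.mp h2).symm
    have inner : ∀ b k : ZMod n, (∑ a : ZMod n, stdAddChar (k*a) * Φ (b - a))
        = stdAddChar (k*b) * ZMod.dft Φ k := by
      intro b k
      have step := Fintype.sum_equiv (Equiv.subLeft b)
        (fun s => stdAddChar (k*b) * (stdAddChar (-(s*k)) * Φ s))
        (fun a => stdAddChar (k*a) * Φ (b - a))
        (by
          intro s
          simp only [Equiv.subLeft_apply, sub_sub_cancel]
          rw [show k * (b - s) = k*b + -(s*k) by ring, AddChar.map_add_eq_mul]
          ring)
      rw [← step, ZMod.dft_apply, Finset.mul_sum]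
      apply Finset.sum_congr rfl
      intro s _
      rw [smul_eq_mul]
    have key : ∀ k : ZMod n, (ZMod.dft Φ k - μ) * (∑ b : ZMod n, stdAddChar (k*b) * w b) = 0 := by
      intro k
      have lhs1 : ∑ a : ZMod n, stdAddChar (k*a) * ((cayleyAdj S).mulVec w a)
          = ZMod.dft Φ k * ∑ b : ZMod n, stdAddChar (k*b) * w b := by
        calc ∑ a : ZMod n, stdAddChar (k*a) * ((cayleyAdj S).mulVec w a)
            = ∑ a : ZMod n, ∑ b : ZMod n, stdAddChar (k*a) * Φ (b - a) * w b := by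
              apply Finset.sum_congr rfl
              intro a _
              rw [show (cayleyAdj S).mulVec w a = ∑ b, Φ (b - a) * w b from rfl, Finset.mul_sum]
              apply Finset.sum_congr rfl
              intro b _
              ring
          _ = ∑ b : ZMod n, ∑ a : ZMod n, stdAddChar (k*a) * Φ (b - a) * w b := Finset.sum_comm
          _ = ∑ b : ZMod n, (stdAddChar (k*b) * ZMod.dft Φ k) * w b := by
              apply Finset.sum_congr rfl
              intro b _
              rw [← inner b k, Finset.sum_mul]
          _ = ZMod.dft Φ k * ∑ b : ZMod n, stdAddChar (k*b) * w b := by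
              rw [Finset.mul_sum]
              apply Finset.sum_congr rfl
              intro b _
              ring
      have lhs2 : ∑ a : ZMod n, stdAddChar (k*a) * ((cayleyAdj S).mulVec w a)
          = μ * ∑ b : ZMod n, stdAddChar (k*b) * w b := by
        rw [Finset.mul_sum]
        apply Finset.sum_congr rfl
        intro a _
        rw [hmv a]
        ring
      rw [sub_mul, lhs1.symm.trans lhs2]
      ring
    have hexists : ∃ k : ZMod n, (∑ b : ZMod n, stdAddChar (k*b) * w b) ≠ 0 := by
      by_contra h
      push_neg at h
      apply hw0
      have hdft : ZMod.dft w = 0 := by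
        funext k'
        rw [ZMod.dft_apply, Pi.zero_apply]
        have := h (-k')
        simp only [neg_mul, neg_neg, smul_eq_mul] at this ⊢
        rw [← this]
        apply Finset.sum_congr rfl
        intro x _
        rw [mul_comm k' x]
      have := congrArg (ZMod.dft (E := ℂ)).symm hdft
      rwa [LinearEquiv.symm_apply_apply, map_zero] at this
    obtain ⟨k, hk⟩ := hexists
    refine ⟨k, ?_⟩
    have hthis := key k
    rcases mul_eq_zero.mp hthis with h | h
    · exact sub_eq_zero.mp h
    · exact absurd h hk
  · rintro _ ⟨k, rfl⟩
    rw [spectrum.mem_iff]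
    intro hunit
    set v : ZMod n → ℂ := fun b => stdAddChar (-(k * b)) with hv
    have hveq : (algebraMap ℂ (Matrix (ZMod n) (ZMod n) ℂ) (ZMod.dft Φ k) - cayleyAdj S).mulVec v = 0 := by
      funext a
      rw [Matrix.sub_mulVec]
      have h1 : (algebraMap ℂ (Matrix (ZMod n) (ZMod n) ℂ) (ZMod.dft Φ k)).mulVec v a
          = ZMod.dft Φ k * v a := by
        rw [Algebra.algebraMap_eq_smul_one, Matrix.smul_mulVec, Matrix.one_mulVec]
        rfl
      simp only [Pi.sub_apply, h1, Pi.zero_apply]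
      rw [mulVec_char S k a]
      ring
    have hvne : v ≠ 0 := by
      intro h
      have := congrFun h 0
      simp only [hv, Pi.zero_apply, mul_zero, neg_zero, AddChar.map_zero_eq_one] at this
      exact one_ne_zero this
    have hdet : (algebraMap ℂ (Matrix (ZMod n) (ZMod n) ℂ) (ZMod.dft Φ k) - cayleyAdj S).det = 0 :=
      Matrix.exists_mulVec_eq_zero_iff.mp ⟨v, hvne, hveq⟩
    exact isUnit_iff_ne_zero.mp ((Matrix.isUnit_iff_isUnit_det _).mp hunit) hdet

lemma pow_modEq {K : Type*} [CommRing K] {ζ : K} {m : ℕ} (h1 : ζ ^ m = 1) {a b : ℕ}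
    (hab : a ≡ b [MOD m]) : ζ ^ a = ζ ^ b := by
  have key : ∀ c : ℕ, ζ ^ c = ζ ^ (c % m) := by
    intro c
    conv_lhs => rw [← Nat.div_add_mod c m]
    rw [pow_add, pow_mul, h1, one_pow, one_mul]
  rw [key a, key b, hab]

lemma gcd_mod (m x : ℕ) : Nat.gcd (x % m) m = Nat.gcd x m :=
  (Nat.gcd_rec m x).symm.trans (Nat.gcd_comm m x)

lemma gcd_unit_mul (u : (ZMod n)ˣ) (s : ZMod n) :
    Nat.gcd ((↑u * s).val) n = Nat.gcd s.val n := by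
  rw [ZMod.val_mul, gcd_mod]
  exact Nat.Coprime.gcd_mul_left_cancel s.val (ZMod.val_coe_unit_coprime u)

lemma rat_int_of_fixed (N : ℕ+) (x : CyclotomicField N ℚ)
    (hfix : ∀ σ : CyclotomicField N ℚ ≃ₐ[ℚ] CyclotomicField N ℚ, σ x = x)
    (hint : IsIntegral ℤ x) :
    ∃ z : ℤ, algebraMap ℚ (CyclotomicField N ℚ) (z : ℚ) = x := by
  haveI : NeZero ((N : ℕ) : ℚ) := ⟨by simp⟩
  haveI : IsCyclotomicExtension {(N : ℕ)} ℚ (CyclotomicField N ℚ) :=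
    CyclotomicField.isCyclotomicExtension _ _
  haveI := IsCyclotomicExtension.isGalois {(N : ℕ)} ℚ (CyclotomicField N ℚ)
  haveI : FiniteDimensional ℚ (CyclotomicField N ℚ) :=
    IsCyclotomicExtension.finiteDimensional {(N : ℕ)} ℚ (CyclotomicField N ℚ)
  have hbot : x ∈ (⊥ : IntermediateField ℚ (CyclotomicField N ℚ)) := by
    rw [← IsGalois.fixedField_fixingSubgroup (⊥ : IntermediateField ℚ (CyclotomicField N ℚ))]
    exact fun σ => hfix σ
  obtain ⟨q, hq⟩ := IntermediateField.mem_bot.mp hbot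
  rw [← hq] at hint
  have hq2 : IsIntegral ℤ q :=
    (isIntegral_algebraMap_iff ((algebraMap ℚ (CyclotomicField N ℚ)).injective)).mp hint
  obtain ⟨z, hz⟩ := IsIntegrallyClosed.isIntegral_iff.mp hq2
  refine ⟨z, ?_⟩
  rw [show ((z : ℤ) : ℚ) = algebraMap ℤ ℚ z from rfl, hz, hq]

lemma exists_unit_mul (m m' : ZMod n)
    (h : Nat.gcd m.val n = Nat.gcd m'.val n) : ∃ u : (ZMod n)ˣ, (↑u : ZMod n) * m = m' := by
  set d := Nat.gcd m.val n with hd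
  have hdn : d ∣ n := Nat.gcd_dvd_right _ _
  have hdm : d ∣ m.val := Nat.gcd_dvd_left _ _
  have hdm' : d ∣ m'.val := h ▸ Nat.gcd_dvd_left _ _
  have hdpos : 0 < d := Nat.pos_of_ne_zero (fun h0 => NeZero.ne n (Nat.eq_zero_of_gcd_eq_zero_right h0))
  set a := m.val / d with ha
  set a' := m'.val / d with ha'
  have hca : a.Coprime (n / d) := Nat.coprime_div_gcd_div_gcd hdpos
  have hca' : a'.Coprime (n / d) := by
    have := Nat.coprime_div_gcd_div_gcd (h ▸ hdpos : 0 < Nat.gcd m'.val n)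
    rwa [← h] at this
  haveI : NeZero (n / d) := by
    have : 0 < n / d := Nat.div_pos (Nat.le_of_dvd (Nat.pos_of_ne_zero (NeZero.ne n)) hdn) hdpos
    exact ⟨by omega⟩
  set w := ZMod.unitOfCoprime a' hca' * (ZMod.unitOfCoprime a hca)⁻¹ with hw
  obtain ⟨u, hu⟩ := ZMod.unitsMap_surjective (Nat.div_dvd_of_dvd hdn) w
  refine ⟨u, ?_⟩
  have hkey : (↑u : ZMod n).val * a ≡ a' [MOD n / d] := by
    have hcast : (((↑u : ZMod n).val : ZMod (n / d))) = (w : ZMod (n / d)) := by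
      rw [← hu]
      rw [ZMod.unitsMap_def]
      rw [ZMod.natCast_val]
      rfl
    have hwa : (w : ZMod (n / d)) * (a : ZMod (n / d)) = (a' : ZMod (n / d)) := by
      have : w * ZMod.unitOfCoprime a hca = ZMod.unitOfCoprime a' hca' := by
        rw [hw, inv_mul_cancel_right]
      have hcoe := congrArg (Units.val) this
      push_cast at hcoe
      rw [ZMod.coe_unitOfCoprime, ZMod.coe_unitOfCoprime] at hcoe
      rw [hcoe]
    have : (((↑u : ZMod n).val * a : ℕ) : ZMod (n / d)) = ((a' : ℕ) : ZMod (n / d)) := by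
      push_cast
      rw [hcast, hwa]
    exact (ZMod.natCast_eq_natCast_iff _ _ _).mp this
  have hmod : (↑u : ZMod n).val * m.val ≡ m'.val [MOD n] := by
    have h1 : m.val = d * a := (Nat.mul_div_cancel' hdm).symm
    have h2 : m'.val = d * a' := (Nat.mul_div_cancel' hdm').symm
    have h4 := Nat.ModEq.mul_left' d hkey
    rw [Nat.mul_div_cancel' hdn] at h4
    calc (↑u : ZMod n).val * m.val = d * ((↑u : ZMod n).val * a) := by rw [h1]; ring
      _ ≡ d * a' [MOD n] := h4
      _ = m'.val := h2.symm
  have := (ZMod.natCast_eq_natCast_iff _ _ _).mpr hmod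
  push_cast at this
  rwa [ZMod.natCast_val, ZMod.natCast_val, ZMod.natCast_val, ZMod.cast_id, ZMod.cast_id,
    ZMod.cast_id] at this

lemma stdAddChar_eq (t : ZMod n) :
    ZMod.stdAddChar t = Complex.exp (2 * Real.pi * Complex.I / n) ^ t.val := by
  have h1 : ZMod.stdAddChar (1 : ZMod n) = Complex.exp (2 * Real.pi * Complex.I / n) := by
    have h := ZMod.stdAddChar_coe (N := n) 1
    push_cast at h
    rw [mul_one] at h
    exact h
  calc ZMod.stdAddChar t = ZMod.stdAddChar ((t.val : ℕ) • (1 : ZMod n)) := by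
        rw [nsmul_eq_mul, mul_one, ZMod.natCast_zmod_val]
    _ = ZMod.stdAddChar (1 : ZMod n) ^ t.val := AddChar.map_nsmul_eq_pow _ _ _
    _ = _ := by rw [h1]

end SoAux

open SoAux ZMod Polynomial in
theorem so_theorem (n : ℕ) (hn : 1 ≤ n) (S : Set (ZMod n))
    (hS0 : S ⊆ {x : ZMod n | x ≠ 0}) (hSneg : S = -S) :
    haveI : NeZero n := ⟨Nat.one_le_iff_ne_zero.mp hn⟩
    IsIntegralCayley S ↔
      ∀ m ∈ S, ∀ m' : ZMod n, Nat.gcd (ZMod.val m) n = Nat.gcd (ZMod.val m') n → m' ∈ S := by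
  haveI : NeZero n := ⟨Nat.one_le_iff_ne_zero.mp hn⟩
  classical
  unfold IsIntegralCayley
  set N : ℕ+ := ⟨n, hn⟩ with hN
  haveI : NeZero ((N : ℕ) : ℚ) := ⟨by simp⟩
  haveI : IsCyclotomicExtension {(N : ℕ)} ℚ (CyclotomicField N ℚ) :=
    CyclotomicField.isCyclotomicExtension _ _
  have hζK : IsPrimitiveRoot (IsCyclotomicExtension.zeta N ℚ (CyclotomicField N ℚ)) (↑N : ℕ) :=
    IsCyclotomicExtension.zeta_spec N ℚ (CyclotomicField N ℚ)
  set ζK := IsCyclotomicExtension.zeta N ℚ (CyclotomicField N ℚ) with hζKdef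
  have hζKn : ζK ^ n = 1 := hζK.pow_eq_one
  have hirr : Irreducible (Polynomial.cyclotomic N ℚ) := Polynomial.cyclotomic.irreducible_rat N.pos
  have hζ : IsPrimitiveRoot (Complex.exp (2 * Real.pi * Complex.I / n)) n :=
    Complex.isPrimitiveRoot_exp n (NeZero.ne n)
  set ζ : ℂ := Complex.exp (2 * Real.pi * Complex.I / n) with hζdef
  have hζmem : ζ ∈ primitiveRoots (↑N : ℕ) ℂ := (mem_primitiveRoots N.pos).mpr hζ
  set φ : CyclotomicField N ℚ →ₐ[ℚ] ℂ :=
    (hζK.embeddingsEquivPrimitiveRoots ℂ hirr).symm ⟨ζ, hζmem⟩ with hφdef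
  have hφζ : φ ζK = ζ := by
    have h := hζK.embeddingsEquivPrimitiveRoots_apply_coe ℂ hirr φ
    rw [← h, hφdef, Equiv.apply_symm_apply]
  have hinj : Function.Injective φ := φ.toRingHom.injective
  have hφpow : ∀ v : ℕ, φ (ζK ^ v) = ζ ^ v := by intro v; rw [map_pow, hφζ]
  set Φ : ZMod n → ℂ := S.indicator (fun _ => (1:ℂ)) with hΦ
  set SF : Finset (ZMod n) := (Set.toFinite S).toFinset with hSF
  set cK : ZMod n → CyclotomicField N ℚ := fun k => ∑ s ∈ SF, ζK ^ ((-(s * k)).val) with hcK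
  have hφcK : ∀ k, φ (cK k) = ZMod.dft Φ k := by
    intro k
    rw [hcK, map_sum, hΦ, dft_indicator]
    exact Finset.sum_congr rfl (fun s _ => by rw [hφpow, ← stdAddChar_eq])
  -- multiplication congruence on vals
  have hvalmul : ∀ (u : (ZMod n)ˣ) (x : ZMod n),
      (↑u : ZMod n).val * x.val ≡ ((↑u : ZMod n) * x).val [MOD n] := by
    intro u x
    rw [ZMod.val_mul]
    exact (Nat.mod_modEq _ n).symm
  constructor
  · -- integral ⟹ gcd-closed
    intro hintgr m hm m' hgcd
    have hrange : ∀ k : ZMod n, ∃ z : ℤ, (z : ℂ) = ZMod.dft Φ k := by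
      intro k
      exact hintgr (by rw [@spectrum_cayley n _ (Classical.decEq _) S]; exact ⟨k, rfl⟩)
    choose z hz using hrange
    obtain ⟨u, hum⟩ := exists_unit_mul m m' hgcd
    set σ : CyclotomicField N ℚ ≃ₐ[ℚ] CyclotomicField N ℚ :=
      (IsCyclotomicExtension.autEquivPow (CyclotomicField N ℚ) hirr).symm u with hσdef
    have hσζ : σ ζK = ζK ^ ((↑u : ZMod n).val) := by
      have h3 : (hζK.autToPow ℚ) σ = u :=
        (IsCyclotomicExtension.autEquivPow (CyclotomicField N ℚ) hirr).apply_symm_apply u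
      rw [← hζK.autToPow_spec ℚ σ, h3]
      rfl
    set Y : ZMod n → CyclotomicField N ℚ :=
      fun t => ∑ k : ZMod n, algebraMap ℚ (CyclotomicField N ℚ) ((z k : ℤ) : ℚ) * ζK ^ ((k * t).val)
      with hY
    have hφY : ∀ t, φ (Y t) = (n : ℂ) * Φ t := by
      intro t
      rw [hY, map_sum]
      have hterm : ∀ k : ZMod n, φ (algebraMap ℚ (CyclotomicField N ℚ) ((z k : ℤ) : ℚ)
            * ζK ^ ((k * t).val))
          = stdAddChar (k * t) * ZMod.dft Φ k := by
        intro k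
        rw [map_mul, hφpow, φ.commutes, stdAddChar_eq]
        rw [eq_ratCast (algebraMap ℚ ℂ) ((z k : ℤ) : ℚ)]
        push_cast
        rw [hz k]
        ring
      rw [Finset.sum_congr rfl (fun k _ => hterm k)]
      have hinv := congrFun (LinearEquiv.symm_apply_apply (ZMod.dft (E := ℂ)) Φ) t
      rw [ZMod.invDFT_apply] at hinv
      have hn0 : (n : ℂ) ≠ 0 := Nat.cast_ne_zero.mpr (NeZero.ne n)
      rw [smul_eq_mul] at hinv
      have := congrArg (fun x => (n : ℂ) * x) hinv
      rw [← mul_assoc, mul_inv_cancel₀ hn0, one_mul] at this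
      rw [← this]
      apply Finset.sum_congr rfl
      intro k _
      rw [smul_eq_mul]
    have hfixY : σ (Y m) = Y m' := by
      rw [hY, map_sum]
      apply Finset.sum_congr rfl
      intro k _
      rw [map_mul, AlgEquiv.commutes, map_pow, hσζ, ← pow_mul]
      congr 1
      apply pow_modEq hζKn
      calc (↑u : ZMod n).val * (k * m).val
          ≡ ((↑u : ZMod n) * (k * m)).val [MOD n] := hvalmul u (k * m)
        _ = (k * m').val := by rw [show (↑u : ZMod n) * (k * m) = k * ((↑u : ZMod n) * m) by ring,
              hum]
    have hYm : Y m = algebraMap ℚ (CyclotomicField N ℚ) (n : ℚ) := by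
      apply hinj
      rw [hφY m, φ.commutes, eq_ratCast (algebraMap ℚ ℂ) (n : ℚ)]
      rw [hΦ, Set.indicator_of_mem hm]
      push_cast
      ring
    have hYm' : φ (Y m') = (n : ℂ) := by
      rw [← hfixY, hYm, AlgEquiv.commutes, φ.commutes, eq_ratCast (algebraMap ℚ ℂ) (n : ℚ)]
      push_cast
      ring
    have hΦm' : (n : ℂ) * Φ m' = (n : ℂ) * 1 := by
      rw [← hφY m', hYm', mul_one]
    have hn0 : (n : ℂ) ≠ 0 := Nat.cast_ne_zero.mpr (NeZero.ne n)
    have hone : Φ m' = 1 := mul_left_cancel₀ hn0 hΦm'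
    by_contra hm'
    rw [hΦ, Set.indicator_of_notMem hm'] at hone
    exact zero_ne_one hone
  · -- gcd-closed ⟹ integral
    intro hclos
    rw [@spectrum_cayley n _ (Classical.decEq _) S]
    rintro _ ⟨k, rfl⟩
    have hfix : ∀ σ : CyclotomicField N ℚ ≃ₐ[ℚ] CyclotomicField N ℚ, σ (cK k) = cK k := by
      intro σ
      set u : (ZMod n)ˣ := hζK.autToPow ℚ σ with hu
      have hσζ : σ ζK = ζK ^ ((↑u : ZMod n).val) := (hζK.autToPow_spec ℚ σ).symm
      rw [hcK, map_sum]
      have hterm : ∀ s : ZMod n, σ (ζK ^ ((-(s * k)).val)) = ζK ^ ((-(((↑u : ZMod n) * s) * k)).val) := by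
        intro s
        rw [map_pow, hσζ, ← pow_mul]
        apply pow_modEq hζKn
        calc (↑u : ZMod n).val * (-(s * k)).val
            ≡ ((↑u : ZMod n) * (-(s * k))).val [MOD n] := hvalmul u (-(s*k))
          _ = (-(((↑u : ZMod n) * s) * k)).val := by rw [show (↑u : ZMod n) * (-(s * k)) = -(((↑u : ZMod n) * s) * k) by ring]
      rw [Finset.sum_congr rfl (fun s _ => hterm s)]
      refine Finset.sum_nbij' (fun s => (↑u : ZMod n) * s) (fun s => (↑u⁻¹ : ZMod n) * s)
        ?_ ?_ ?_ ?_ ?_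
      · intro s hs
        rw [hSF, Set.Finite.mem_toFinset] at hs ⊢
        exact hclos s hs _ (gcd_unit_mul u s).symm
      · intro s hs
        rw [hSF, Set.Finite.mem_toFinset] at hs ⊢
        exact hclos s hs _ (gcd_unit_mul u⁻¹ s).symm
      · intro s _
        simp [← mul_assoc, ← Units.val_mul]
      · intro s _
        simp [← mul_assoc, ← Units.val_mul]
      · intro s _
        rfl
    have hint : IsIntegral ℤ (cK k) := by
      rw [hcK]
      exact IsIntegral.sum _ (fun s _ => (hζK.isIntegral N.pos).pow _)
    obtain ⟨zz, hzz⟩ := rat_int_of_fixed N (cK k) hfix hint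
    refine ⟨zz, ?_⟩
    have := congrArg φ hzz
    rw [φ.commutes, hφcK k, eq_ratCast (algebraMap ℚ ℂ) ((zz : ℤ) : ℚ)] at this
    push_cast at this
    exact this
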